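/- Let E be a (0,1,−1) matrix with zero row sums and zero column sums, and suppose A and A+E are Gram mates (i.e., A and A+E are (0,1) matrices with AAᵀ = (A+E)(A+E)ᵀ, AᵀA = (A+E)ᵀ(A+E), and E ≠ 0). Then for every vector x in the row space of E, Ax lies in the column space of E, and for every vector y in the column space of E, Aᵀy lies in the row space of E. -/

import Mathlib

open Matrix

theorem stmt3 (m n : ℕ) (A E : Matrix (Fin m) (Fin n) ℝ)
    (hA : ∀ i j, A i j = 0 ∨ A i j = 1)
    (hAE : ∀ i j, (A + E) i j = 0 ∨ (A + E) i j = 1)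
    (hE : ∀ i j, E i j = 0 ∨ E i j = 1 ∨ E i j = -1)
    (hE0 : E ≠ 0)
    (hrow : E *ᵥ (fun _ => 1) = 0)
    (hcol : (fun _ => 1) ᵥ* E = 0)
    (h1 : A * Aᵀ = (A + E) * (A + E)ᵀ)
    (h2 : Aᵀ * A = (A + E)ᵀ * (A + E)) :
    (∀ x : Fin n → ℝ, x ∈ Submodule.span ℝ (Set.range fun i => E i) →
      A *ᵥ x ∈ Submodule.span ℝ (Set.range fun j => Eᵀ j)) ∧
    (∀ y : Fin m → ℝ, y ∈ Submodule.span ℝ (Set.range fun j => Eᵀ j) →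
      Aᵀ *ᵥ y ∈ Submodule.span ℝ (Set.range fun i => E i)) := by
  have key1 : A * Eᵀ = E * (-(A + E))ᵀ := by
    have expand : (A + E) * (A + E)ᵀ = A * Aᵀ + (A * Eᵀ + E * (A + E)ᵀ) := by
      rw [Matrix.add_mul, Matrix.transpose_add, Matrix.mul_add]
      abel
    have : A * Eᵀ + E * (A + E)ᵀ = 0 :=
      add_eq_left.mp (h1.trans expand).symm
    rw [Matrix.transpose_neg, Matrix.mul_neg, eq_neg_iff_add_eq_zero]
    exact this
  have key2 : Aᵀ * E = Eᵀ * (-(A + E)) := by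
    have expand : (A + E)ᵀ * (A + E) = Aᵀ * A + (Aᵀ * E + Eᵀ * (A + E)) := by
      rw [Matrix.transpose_add, Matrix.add_mul, Matrix.mul_add]
      abel
    have : Aᵀ * E + Eᵀ * (A + E) = 0 :=
      add_eq_left.mp (h2.trans expand).symm
    rw [Matrix.mul_neg, eq_neg_iff_add_eq_zero]
    exact this
  have hspanE : Submodule.span ℝ (Set.range fun i => E i)
      = LinearMap.range (Eᵀ).mulVecLin := by
    rw [Matrix.range_mulVecLin]
    rfl
  have hspanET : Submodule.span ℝ (Set.range fun j => Eᵀ j)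
      = LinearMap.range E.mulVecLin := by
    rw [Matrix.range_mulVecLin]
    rfl
  constructor
  · intro x hx
    rw [hspanE] at hx
    rw [hspanET]
    obtain ⟨y, rfl⟩ := hx
    refine ⟨(-(A + E))ᵀ *ᵥ y, ?_⟩
    simp only [Matrix.mulVecLin_apply]
    rw [Matrix.mulVec_mulVec, Matrix.mulVec_mulVec, key1]
  · intro y hy
    rw [hspanET] at hy
    rw [hspanE]
    obtain ⟨z, rfl⟩ := hy
    refine ⟨(-(A + E)) *ᵥ z, ?_⟩
    simp only [Matrix.mulVecLin_apply]
    rw [Matrix.mulVec_mulVec, Matrix.mulVec_mulVec, key2]
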